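/- Restricted to the orthogonal complement of the span of the all-ones vector, the Laplacian of a connected undirected graph is positive definite: for every x orthogonal to 1_n with x ≠ 0, xᵀ L x > 0. -/
import Mathlib

open Matrix

/-- For a connected undirected graph on `n` vertices with Laplacian
`L = B * Bᵀ`, the Laplacian is positive definite on the orthogonal complement
of the all-ones vector: for every `x ⟂ 1ₙ` with `x ≠ 0`, `xᵀ L x > 0`. -/
theorem laplacian_posDef_on_ones_complement
    (n m : ℕ) (tail head : Fin m → Fin n)
    (hne : ∀ k, tail k ≠ head k)
    (B : Matrix (Fin n) (Fin m) ℝ)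
    (hB : ∀ i k, B i k = if i = tail k then 1 else if i = head k then -1 else 0)
    (G : SimpleGraph (Fin n))
    (hG : G = SimpleGraph.fromRel (fun i j => ∃ k, tail k = i ∧ head k = j))
    (hconn : G.Connected)
    (L : Matrix (Fin n) (Fin n) ℝ) (hL : L = B * Bᵀ)
    (x : Fin n → ℝ) (horth : x ⬝ᵥ (fun _ => (1 : ℝ)) = 0) (hx : x ≠ 0) :
    0 < x ⬝ᵥ L.mulVec x := by
  have hy : ∀ k, (Bᵀ *ᵥ x) k = x (tail k) - x (head k) := by
    intro k
    have h : ∀ i, Bᵀ k i * x i =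
        (if i = tail k then x i else 0) + (if i = head k then -(x i) else 0) := by
      intro i
      simp only [Matrix.transpose_apply, hB]
      by_cases h1 : i = tail k
      · have h2 : i ≠ head k := by subst h1; exact hne k
        simp [h1, h2, hne k]
      · by_cases h2 : i = head k <;> simp [h1, h2, (hne k).symm]
    simp only [Matrix.mulVec, dotProduct, h, Finset.sum_add_distrib,
      Finset.sum_ite_eq', Finset.mem_univ, if_true]
    ring
  have key : x ⬝ᵥ L.mulVec x = ∑ k, (x (tail k) - x (head k))^2 := by
    rw [hL, ← Matrix.mulVec_mulVec, Matrix.dotProduct_mulVec,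
      ← Matrix.mulVec_transpose]
    simp only [dotProduct, hy]
    exact Finset.sum_congr rfl fun k _ => by ring
  rw [key]
  have hnn : ∀ k ∈ Finset.univ, (0:ℝ) ≤ (x (tail k) - x (head k))^2 :=
    fun k _ => sq_nonneg _
  rcases lt_or_eq_of_le (Finset.sum_nonneg hnn) with h | h
  · exact h
  exfalso
  -- all edge differences vanish
  have hzero : ∀ k, x (tail k) = x (head k) := by
    intro k
    have := (Finset.sum_eq_zero_iff_of_nonneg hnn).mp h.symm k (Finset.mem_univ k)
    have := pow_eq_zero_iff (n := 2) (by norm_num) |>.mp this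
    linarith [sub_eq_zero.mp this]
  have hadj : ∀ i j, G.Adj i j → x i = x j := by
    intro i j hij
    subst hG
    rcases hij with ⟨-, ⟨k, hk1, hk2⟩ | ⟨k, hk1, hk2⟩⟩
    · rw [← hk1, ← hk2]; exact hzero k
    · rw [← hk1, ← hk2]; exact (hzero k).symm
  have hreach : ∀ i j, G.Reachable i j → x i = x j := by
    intro i j hr
    obtain ⟨w⟩ := hr
    induction w with
    | nil => rfl
    | cons h p ih => exact (hadj _ _ h).trans ih
  have hne0 : (0:ℕ) < n := by
    rcases hconn.nonempty with ⟨i⟩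
    exact i.pos
  set i0 : Fin n := ⟨0, hne0⟩
  have hconst : ∀ j, x j = x i0 := fun j => (hreach i0 j (hconn i0 j)).symm
  have hsum : ∑ j, x j = 0 := by
    simpa [dotProduct] using horth
  rw [Finset.sum_congr rfl (fun j _ => hconst j), Finset.sum_const,
    Finset.card_univ, Fintype.card_fin, nsmul_eq_mul] at hsum
  have : x i0 = 0 := by
    have hn : (n:ℝ) ≠ 0 := Nat.cast_ne_zero.mpr hne0.ne'
    exact (mul_eq_zero.mp hsum).resolve_left hn
  exact hx (funext fun j => by rw [hconst j, this]; rfl)
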